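/- Let G be a connected bipartite graph with e edges and n vertices, 2-cell embedded in an orientable surface with rotation system Π having f(Π) faces, and suppose f' of these faces have length at most 2i (for some integer i ≥ 2) while all other faces have length at least 2i+2 (and every face has length at least 4, since G is bipartite). Then 2e ≥ (2i+2)·f(Π) − (2i−2)·f', and consequently the genus g of the embedding satisfies g ≥ (i/(2i+2))·e − ((i−1)/(2i+2))·f' − (n−2)/2. -/

import Mathlib

open SimpleGraph

/-- A rotation system on a simple graph (encodes a 2-cell embedding in an
orientable surface). -/
structure RotationSystem {V : Type} (G : SimpleGraph V) where
  rot : Equiv.Perm G.Dart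
  fst_rot : ∀ d : G.Dart, (rot d).toProd.1 = d.toProd.1

/-- Number of orbits of a permutation. -/
noncomputable def numOrbits {α : Type} (f : Equiv.Perm α) : ℕ :=
  Nat.card (Quotient (Equiv.Perm.SameCycle.setoid f))

/-- The size of an orbit of a permutation. -/
noncomputable def orbitSize {α : Type} (f : Equiv.Perm α)
    (c : Quotient (Equiv.Perm.SameCycle.setoid f)) : ℕ :=
  Nat.card {x : α // Quotient.mk (Equiv.Perm.SameCycle.setoid f) x = c}

namespace RotationSystem

variable {V : Type} {G : SimpleGraph V}

/-- The face-tracing permutation of a rotation system. -/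
def facePerm (ρ : RotationSystem G) : Equiv.Perm G.Dart :=
  (Function.Involutive.toPerm _ (Dart.symm_involutive (G := G))).trans ρ.rot

/-- The faces of the embedding determined by a rotation system: orbits of the
face-tracing permutation on darts. -/
def Face (ρ : RotationSystem G) : Type :=
  Quotient (Equiv.Perm.SameCycle.setoid ρ.facePerm)

/-- The number of faces of the embedding determined by a rotation system. -/
noncomputable def faceCount (ρ : RotationSystem G) : ℕ := numOrbits ρ.facePerm

/-- The length of a face: the number of darts on its boundary walk. -/
noncomputable def faceLength (ρ : RotationSystem G) (c : ρ.Face) : ℕ :=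
  orbitSize ρ.facePerm c

end RotationSystem

/-- Let `G` be a connected bipartite graph with `e` edges and `n` vertices,
2-cell embedded in an orientable surface via a rotation system `Π` with
`f(Π)` faces, of which `f'` have length at most `2i` (where `i ≥ 2`), while all
other faces have length at least `2i+2`, and every face has length at least
`4`.  Then `2e ≥ (2i+2)·f(Π) − (2i−2)·f'`, and the genus `g` of the embedding
(given by Euler's formula `n − e + f = 2 − 2g`) satisfies
`g ≥ (i/(2i+2))·e − ((i−1)/(2i+2))·f' − (n−2)/2`. -/
theorem face_count_genus_lower_bound {V : Type} [Fintype V] (G : SimpleGraph V)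
    (hG : G.Connected) (hbip : G.Colorable 2) (i : ℕ) (hi : 2 ≤ i)
    (ρ : RotationSystem G)
    (e n : ℕ) (he : e = Nat.card G.edgeSet) (hn : n = Fintype.card V)
    (hlen4 : ∀ c : ρ.Face, 4 ≤ ρ.faceLength c)
    (hdichotomy : ∀ c : ρ.Face, ρ.faceLength c ≤ 2 * i ∨ 2 * i + 2 ≤ ρ.faceLength c)
    (f' : ℕ) (hf' : f' = Nat.card {c : ρ.Face // ρ.faceLength c ≤ 2 * i})
    (g : ℤ) (hEuler : (n : ℤ) - e + ρ.faceCount = 2 - 2 * g) :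
    (2 * e : ℤ) ≥ (2 * i + 2) * ρ.faceCount - (2 * i - 2) * f' ∧
    (g : ℚ) ≥ (i : ℚ) / (2 * i + 2) * e - ((i : ℚ) - 1) / (2 * i + 2) * f'
      - ((n : ℚ) - 2) / 2 := by
  classical
  haveI : DecidableEq V := Classical.decEq V
  haveI : DecidableRel G.Adj := Classical.decRel _
  haveI : Finite ρ.Face := Quotient.finite (Equiv.Perm.SameCycle.setoid ρ.facePerm)
  haveI : Fintype ρ.Face := Fintype.ofFinite _
  -- sum of face lengths = number of darts = 2e
  have hsum : ∑ c : ρ.Face, ρ.faceLength c = 2 * e := by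
    have h1 : ∑ c : ρ.Face, ρ.faceLength c = Fintype.card G.Dart := by
      simp only [RotationSystem.faceLength, orbitSize, Nat.card_eq_fintype_card]
      rw [← Fintype.card_sigma]
      exact Fintype.card_congr (Equiv.sigmaFiberEquiv _)
    rw [h1, dart_card_eq_twice_card_edges, he, Nat.card_eq_fintype_card,
      edgeFinset_card]
  -- f' as a filter card
  set S : Finset ρ.Face := Finset.univ.filter (fun c => ρ.faceLength c ≤ 2 * i) with hS
  have hf'S : f' = S.card := by
    rw [hf', Nat.card_eq_fintype_card, Fintype.card_subtype]
  have hface : ρ.faceCount = Fintype.card ρ.Face := by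
    rw [RotationSystem.faceCount, numOrbits, Nat.card_eq_fintype_card]
    exact Fintype.card_congr (Equiv.refl _)
  have hf'le : f' ≤ ρ.faceCount := by
    rw [hf'S, hface, ← Finset.card_univ]; exact Finset.card_filter_le _ _
  -- key inequality in ℕ
  have hkey : 4 * f' + (2 * i + 2) * (ρ.faceCount - f') ≤ 2 * e := by
    rw [← hsum, hf'S, hface, ← Finset.card_univ, ← Finset.card_filter_add_card_filter_not (s := Finset.univ) (p := fun c => ρ.faceLength c ≤ 2 * i)]
    have : S.card + (Finset.univ.filter (fun c => ¬ ρ.faceLength c ≤ 2 * i)).card - S.card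
        = (Finset.univ.filter (fun c => ¬ ρ.faceLength c ≤ 2 * i)).card := by omega
    rw [this]
    rw [← Finset.sum_filter_add_sum_filter_not Finset.univ (fun c => ρ.faceLength c ≤ 2 * i)]
    gcongr
    · calc 4 * S.card = ∑ _c ∈ S, 4 := by rw [Finset.sum_const]; ring
        _ ≤ ∑ c ∈ S, ρ.faceLength c := Finset.sum_le_sum fun c _ => hlen4 c
    · calc (2*i+2) * _ = ∑ _c ∈ Finset.univ.filter (fun c => ¬ ρ.faceLength c ≤ 2*i), (2*i+2) := by
            rw [Finset.sum_const]; ring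
        _ ≤ _ := Finset.sum_le_sum fun c hc => by
            rcases hdichotomy c with h | h
            · exact absurd h (Finset.mem_filter.mp hc).2
            · exact h
  have part1 : (2 * e : ℤ) ≥ (2 * i + 2) * ρ.faceCount - (2 * i - 2) * f' := by
    have h2 : 2 ≤ (i : ℤ) := by exact_mod_cast hi
    have h3 : (f' : ℤ) ≤ ρ.faceCount := by exact_mod_cast hf'le
    have h4 : (4 * f' + (2 * i + 2) * ((ρ.faceCount : ℤ) - f') : ℤ) ≤ 2 * e := by
      have hk := hkey
      zify [hf'le] at hk
      linarith
    nlinarith [h4]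
  refine ⟨part1, ?_⟩
  -- rational part
  have hD : (0 : ℚ) < 2 * i + 2 := by positivity
  have hp1 : (2 * e : ℚ) ≥ (2 * i + 2) * ρ.faceCount - (2 * i - 2) * f' := by
    exact_mod_cast part1
  have hE : (n : ℚ) - e + ρ.faceCount = 2 - 2 * g := by exact_mod_cast hEuler
  rw [ge_iff_le, div_mul_eq_mul_div, div_mul_eq_mul_div, ← sub_div, ← sub_nonneg]
  have : (g : ℚ) - (((i:ℚ) * e - ((i:ℚ) - 1) * f') / (2 * i + 2) - ((n:ℚ) - 2) / 2)
      = (2 * e - ((2 * i + 2) * ρ.faceCount - (2 * i - 2) * f')) / (2 * (2 * i + 2)) := by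
    have hgg : (g : ℚ) = (2 - n + e - ρ.faceCount) / 2 := by linarith
    rw [hgg]
    field_simp
    ring
  rw [this]
  apply div_nonneg
  · linarith
  · positivity
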